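/- Let f, g, λ and φ_λ be as in the forward-backward envelope setting, let x̃ ∈ T_λ(x) := argmin_z [ℓ_f(x,z) + (1/(2λ))‖z-x‖² + g(z)] with ℓ_f(x,z) = f(x) + ⟨∇f(x), z-x⟩, and suppose f(x̃) ≤ ℓ_f(x, x̃) + (L/2)‖x̃ - x‖². Then φ(x̃) ≤ φ_λ(x) - ((1 - λL)/(2λ))‖x̃ - x‖², where φ = f + g. -/

import Mathlib

open Filter Topology
open scoped RealInnerProductSpace

noncomputable section

/-- The forward-backward model function
ψ_λ(x,z) = f(x) + ⟨∇f(x), z-x⟩ + (1/(2λ))‖z-x‖² + g(z). -/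
def fbModel {n : ℕ} (f : EuclideanSpace ℝ (Fin n) → ℝ)
    (gradf : EuclideanSpace ℝ (Fin n) → EuclideanSpace ℝ (Fin n))
    (g : EuclideanSpace ℝ (Fin n) → EReal) (lam : ℝ)
    (x z : EuclideanSpace ℝ (Fin n)) : EReal :=
  ((f x + ⟪gradf x, z - x⟫ + 1 / (2 * lam) * ‖z - x‖ ^ 2 : ℝ) : EReal) + g z

/-- The forward-backward envelope φ_λ(x) = min_z ψ_λ(x,z). -/
def fbEnvelope {n : ℕ} (f : EuclideanSpace ℝ (Fin n) → ℝ)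
    (gradf : EuclideanSpace ℝ (Fin n) → EuclideanSpace ℝ (Fin n))
    (g : EuclideanSpace ℝ (Fin n) → EReal) (lam : ℝ)
    (x : EuclideanSpace ℝ (Fin n)) : EReal :=
  ⨅ z, fbModel f gradf g lam x z

/-- Sufficient-decrease property of the forward-backward step: if x̃ ∈ T_λ(x) and the
descent inequality f(x̃) ≤ ℓ_f(x,x̃) + (L/2)‖x̃-x‖² holds, then
φ(x̃) ≤ φ_λ(x) - ((1-λL)/(2λ))‖x̃-x‖². -/
theorem fb_sufficient_decrease
    {n : ℕ} (f : EuclideanSpace ℝ (Fin n) → ℝ)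
    (gradf : EuclideanSpace ℝ (Fin n) → EuclideanSpace ℝ (Fin n))
    (hgrad : ∀ x, HasGradientAt f (gradf x) x)
    (g : EuclideanSpace ℝ (Fin n) → EReal)
    (hproper : ∃ y, g y ≠ ⊤) (hnotbot : ∀ y, g y ≠ ⊥)
    (hlsc : LowerSemicontinuous g)
    (lamg : ℝ) (hlamg : 0 < lamg)
    (hproxbdd : ∀ lam : ℝ, 0 < lam → lam < lamg →
      ∀ x, ∃ z, ∀ z', fbModel f gradf g lam x z ≤ fbModel f gradf g lam x z')
    (lam : ℝ) (hlam0 : 0 < lam) (hlam : lam < lamg)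
    (L : ℝ) (x xt : EuclideanSpace ℝ (Fin n))
    (hxt : ∀ z', fbModel f gradf g lam x xt ≤ fbModel f gradf g lam x z')
    (hdescent : f xt ≤ f x + ⟪gradf x, xt - x⟫ + L / 2 * ‖xt - x‖ ^ 2) :
    ((f xt : ℝ) : EReal) + g xt
      ≤ fbEnvelope f gradf g lam x
          - (((1 - lam * L) / (2 * lam) * ‖xt - x‖ ^ 2 : ℝ) : EReal) := by
  have henv : fbEnvelope f gradf g lam x = fbModel f gradf g lam x xt :=
    le_antisymm (iInf_le _ xt) (le_iInf hxt)
  rw [henv]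
  unfold fbModel
  set b : ℝ := f x + ⟪gradf x, xt - x⟫ + 1 / (2 * lam) * ‖xt - x‖ ^ 2 with hb
  set c : ℝ := (1 - lam * L) / (2 * lam) * ‖xt - x‖ ^ 2 with hc
  have key : f xt ≤ b - c := by
    have : b - c = f x + ⟪gradf x, xt - x⟫ + L / 2 * ‖xt - x‖ ^ 2 := by
      rw [hb, hc]; field_simp; ring
    rw [this]; exact hdescent
  calc ((f xt : ℝ) : EReal) + g xt ≤ ((b - c : ℝ) : EReal) + g xt := by
        exact add_le_add_left (EReal.coe_le_coe_iff.mpr key) _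
    _ = (b : EReal) + g xt - (c : EReal) := by
        rw [EReal.coe_sub, sub_eq_add_neg, sub_eq_add_neg]
        rw [add_assoc, add_comm (-(c:EReal)) (g xt), ← add_assoc]
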